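/- Fix n ≥ 4, λ ≠ 0, a ∈ ℝ[x₁] of degree n−1, and g ∈ ℝ[t] with g(0) = 0. Define u_i = λx_i + H_i where H₁ = g(x₂ − a(x₁)), H_i = x_{i+1} + ((−1)^i/(i−1)!) a^{(i−1)}(x₁) g(x₂ − a(x₁))^{i−1} for 2 ≤ i ≤ n−1, and H_n = ((−1)^n/(n−1)!) a^{(n−1)}(x₁) g(x₂ − a(x₁))^{n−1}. Then Σ_{i=2}^{n} ((−1)^i / λ^{i−1}) u_i − a(u₁/λ) = x₂ − a(x₁). -/

import Mathlib

lemma taylor_sum (a : Polynomial ℝ) (n : ℕ) (h : a.natDegree < n) (x y : ℝ) :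
    a.eval (x + y) = ∑ j ∈ Finset.range n,
      (Polynomial.derivative^[j] a).eval x * y^j / (Nat.factorial j) := by
  have h1 : a.eval (x + y) = (Polynomial.taylor x a).eval y := by
    rw [Polynomial.taylor_eval, add_comm]
  rw [h1, Polynomial.eval_eq_sum_range' (by rwa [Polynomial.natDegree_taylor])]
  refine Finset.sum_congr rfl fun j _ => ?_
  rw [Polynomial.taylor_coeff]
  have h2 : (Nat.factorial j • Polynomial.hasseDeriv j) a = Polynomial.derivative^[j] a :=
    congrFun (Polynomial.factorial_smul_hasseDeriv (R := ℝ) (k := j)) a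
  have h3 : (Nat.factorial j : ℝ) * (Polynomial.hasseDeriv j a).eval x
      = (Polynomial.derivative^[j] a).eval x := by
    rw [← h2]; simp [nsmul_eq_mul]
  have hf : (Nat.factorial j : ℝ) ≠ 0 := Nat.cast_ne_zero.2 (Nat.factorial_ne_zero j)
  rw [← h3]; field_simp

theorem stmt10 (n : ℕ) (hn : 4 ≤ n) (lam : ℝ) (hlam : lam ≠ 0)
    (a g : Polynomial ℝ) (ha : a.natDegree = n - 1) (hg : g.eval 0 = 0)
    (x : ℕ → ℝ) (u : ℕ → ℝ)
    (hu : ∀ i, u i = lam * x i +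
      (if i = 1 then g.eval (x 2 - a.eval (x 1))
       else if i = n then
         (-1 : ℝ)^n / (Nat.factorial (n-1)) *
           ((Polynomial.derivative^[n-1] a).eval (x 1)) *
           (g.eval (x 2 - a.eval (x 1)))^(n-1)
       else x (i+1) + (-1 : ℝ)^i / (Nat.factorial (i-1)) *
           ((Polynomial.derivative^[i-1] a).eval (x 1)) *
           (g.eval (x 2 - a.eval (x 1)))^(i-1))) :
    (∑ i ∈ Finset.Icc 2 n, (-1 : ℝ)^i / lam^(i-1) * u i) - a.eval (u 1 / lam) =
      x 2 - a.eval (x 1) := by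
  obtain ⟨m, rfl⟩ : ∃ m, n = m + 2 := ⟨n - 2, by omega⟩
  set h := g.eval (x 2 - a.eval (x 1)) with hh
  set D : ℕ → ℝ := fun j => (Polynomial.derivative^[j] a).eval (x 1) with hD
  set A : ℕ → ℝ := fun i => (-1:ℝ)^i * x i / lam^(i-2) with hA
  set T : ℕ → ℝ := fun j => D j * (h/lam)^j / (Nat.factorial j) with hT
  -- Taylor expansion of a at u 1 / lam
  have hu1 : u 1 / lam = x 1 + h / lam := by
    rw [hu 1, if_pos rfl]; field_simp
  have htay : a.eval (u 1 / lam) = ∑ j ∈ Finset.range (m+2), T j := by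
    rw [hu1]
    exact taylor_sum a (m+2) (by omega) (x 1) (h/lam)
  -- convert the sum to a range sum
  have hIcc : Finset.Icc 2 (m+2) = Finset.Ico 2 (m+3) := by rw [← Finset.Ico_add_one_right_eq_Icc]; rfl
  rw [hIcc, Finset.sum_Ico_eq_sum_range]
  have hmm : m + 3 - 2 = m + 1 := by omega
  rw [hmm]
  have key : ∀ k ∈ Finset.range (m+1), (-1:ℝ)^(2+k) / lam^(2+k-1) * u (2+k)
      = (A (k+2) + (if k = m then 0 else -A (k+3))) + T (k+1) := by
    intro k hk
    rw [hu (2+k)]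
    have e1 : 2 + k - 1 = k + 1 := by omega
    have e2 : 2 + k ≠ 1 := by omega
    rw [e1, if_neg e2]
    by_cases hkm : k = m
    · subst hkm
      rw [if_pos (by omega), if_pos rfl]
      have e3 : k + 2 - 1 = k + 1 := by omega
      have e4 : k + 2 - 2 = k := by omega
      simp only [hA, hT, hD, e3, e4, ← hh]
      have hl : lam ^ (k+1) ≠ 0 := pow_ne_zero _ hlam
      have hf : (Nat.factorial (k+1) : ℝ) ≠ 0 := Nat.cast_ne_zero.2 (Nat.factorial_ne_zero _)
      rcases Nat.even_or_odd k with hm | hm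
      · simp only [pow_add, hm.neg_one_pow, div_pow]
        field_simp; ring
      · simp only [pow_add, hm.neg_one_pow, div_pow]
        field_simp; ring
    · rw [if_neg (by omega), if_neg hkm]
      have e5 : 2 + k + 1 = k + 3 := by omega
      have e6 : k + 2 - 2 = k := by omega
      have e7 : k + 3 - 2 = k + 1 := by omega
      simp only [hA, hT, hD, e5, e6, e7, ← hh]
      have hl : lam ^ (k+1) ≠ 0 := pow_ne_zero _ hlam
      have hf : (Nat.factorial (k+1) : ℝ) ≠ 0 := Nat.cast_ne_zero.2 (Nat.factorial_ne_zero _)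
      rcases Nat.even_or_odd k with hm | hm
      · simp only [pow_add, hm.neg_one_pow, div_pow]
        field_simp; ring
      · simp only [pow_add, hm.neg_one_pow, div_pow]
        field_simp; ring
  rw [Finset.sum_congr rfl key, Finset.sum_add_distrib]
  -- telescoping part
  have htel : ∑ k ∈ Finset.range (m+1), (A (k+2) + (if k = m then 0 else -A (k+3))) = A 2 := by
    rw [Finset.sum_range_succ, if_pos rfl, add_zero]
    have : ∀ k ∈ Finset.range m, (A (k+2) + (if k = m then 0 else -A (k+3)))
        = A (k+2) - A ((k+1)+2) := by
      intro k hk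
      rw [if_neg (by simp at hk; omega)]
      have : k + 1 + 2 = k + 3 := by omega
      rw [this]; ring
    rw [Finset.sum_congr rfl this, Finset.sum_range_sub' (fun k => A (k+2))]
    ring_nf
  -- Taylor part
  have hT2 : ∑ k ∈ Finset.range (m+1), T (k+1) = (∑ j ∈ Finset.range (m+2), T j) - T 0 := by
    rw [Finset.sum_range_succ' T (m+1)]; ring
  rw [htel, hT2, htay]
  have hA2 : A 2 = x 2 := by simp [hA]
  have hT0 : T 0 = a.eval (x 1) := by simp [hT, hD]
  rw [hA2, hT0]; ring
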